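/- Let V₁, V₂ : ℂ^m → ℂ^n be isometries, let |0⟩ ∈ ℂ² be a unit vector, and set V̂₁ = |0⟩ ⊗ V₁ and V̂₂ = (U_W ⊗ I)(|0⟩ ⊗ V₂) for a unitary U_W acting on ℂ² ⊗ ℂ^k (with n = k·n′ and appropriate tensor factorization ℂ^n = ℂ^k ⊗ ℂ^{n′}). Then V̂₁† V̂₂ = V₁†(W ⊗ I)V₂ where W = (⟨0|⊗I) U_W (|0⟩⊗I) is a contraction, and ‖V̂₁ − V̂₂‖² = 2‖I − Re(V₁†(W ⊗ I)V₂)‖. -/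

import Mathlib

open scoped ComplexOrder Kronecker
open Matrix

noncomputable def opNorm {m n : Type*} [Fintype m] [Fintype n] [DecidableEq n]
    (A : Matrix m n ℂ) : ℝ :=
  ‖(Matrix.toEuclideanLin A).toContinuousLinearMap‖

noncomputable def traceNorm {n : Type*} [Fintype n] [DecidableEq n] (A : Matrix n n ℂ) : ℝ :=
  (((Matrix.posSemidef_conjTranspose_mul_self A).1.eigenvectorUnitary : Matrix n n ℂ) *
    diagonal (((↑) : ℝ → ℂ) ∘ (√·) ∘ (Matrix.posSemidef_conjTranspose_mul_self A).1.eigenvalues) *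
    (star (Matrix.posSemidef_conjTranspose_mul_self A).1.eigenvectorUnitary :
      Matrix n n ℂ)).trace.re

noncomputable def frobNorm {n : Type*} [Fintype n] (A : Matrix n n ℂ) : ℝ :=
  Real.sqrt ((Aᴴ * A).trace.re)

section helpers
open scoped Matrix.Norms.L2Operator

lemma opNorm_eq_norm {m n : Type*} [Fintype m] [Fintype n] [DecidableEq n]
    (A : Matrix m n ℂ) : opNorm A = ‖A‖ := rfl

lemma norm_one_le' (n : Type*) [Fintype n] [DecidableEq n] :
    ‖(1 : Matrix n n ℂ)‖ ≤ 1 := by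
  have h : ‖(1 : Matrix n n ℂ)ᴴ * 1‖ = ‖(1 : Matrix n n ℂ)‖ * ‖(1 : Matrix n n ℂ)‖ :=
    Matrix.l2_opNorm_conjTranspose_mul_self _
  simp only [Matrix.conjTranspose_one, mul_one] at h
  nlinarith [norm_nonneg (1 : Matrix n n ℂ)]

lemma norm_le_one_of_isometry {m n : Type*} [Fintype m] [Fintype n] [DecidableEq m] [DecidableEq n]
    {A : Matrix m n ℂ} (h : Aᴴ * A = 1) : ‖A‖ ≤ 1 := by
  have h2 : ‖A‖ * ‖A‖ ≤ 1 := by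
    rw [← Matrix.l2_opNorm_conjTranspose_mul_self, h]; exact norm_one_le' n
  nlinarith [norm_nonneg A]

lemma sum_swap3 {α β γ : Type*} [Fintype α] [Fintype β] [Fintype γ] (f : α → β → γ → ℂ) :
    ∑ x : α, ∑ y : β, ∑ z : γ, f x y z = ∑ z : γ, ∑ y : β, ∑ x : α, f x y z :=
  calc ∑ x : α, ∑ y : β, ∑ z : γ, f x y z
      = ∑ y : β, ∑ x : α, ∑ z : γ, f x y z := Finset.sum_comm
    _ = ∑ y : β, ∑ z : γ, ∑ x : α, f x y z :=
        Finset.sum_congr rfl (fun _ _ => Finset.sum_comm)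
    _ = ∑ z : γ, ∑ y : β, ∑ x : α, f x y z := Finset.sum_comm

/-- Qubit-augmented isometric extensions: `V̂₁†V̂₂ = V₁†(W ⊗ I)V₂` with `W` a contraction,
and `‖V̂₁ − V̂₂‖² = 2‖I − Re(V₁†(W ⊗ I)V₂)‖`. -/
theorem augmented_isometry_overlap {m k n' : ℕ}
    (V₁ V₂ : Matrix (Fin k × Fin n') (Fin m) ℂ)
    (hV₁ : V₁ᴴ * V₁ = 1) (hV₂ : V₂ᴴ * V₂ = 1)
    (U : Matrix (Fin 2 × Fin k) (Fin 2 × Fin k) ℂ)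
    (hU : U ∈ Matrix.unitaryGroup (Fin 2 × Fin k) ℂ)
    (Vh₁ Vh₂₀ : Matrix (Fin 2 × Fin k × Fin n') (Fin m) ℂ)
    (hVh₁ : Vh₁ = fun r j => (if r.1 = 0 then 1 else 0) * V₁ r.2 j)
    (hVh₂₀ : Vh₂₀ = fun r j => (if r.1 = 0 then 1 else 0) * V₂ r.2 j)
    (UI : Matrix (Fin 2 × Fin k × Fin n') (Fin 2 × Fin k × Fin n') ℂ)
    (hUI : UI = fun r c => U (r.1, r.2.1) (c.1, c.2.1) * (if r.2.2 = c.2.2 then 1 else 0))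
    (W : Matrix (Fin k) (Fin k) ℂ) (hW : W = fun e e' => U (0, e) (0, e'))
    (WI : Matrix (Fin k × Fin n') (Fin k × Fin n') ℂ)
    (hWI : WI = fun r c => W r.1 c.1 * (if r.2 = c.2 then 1 else 0)) :
    opNorm W ≤ 1 ∧
    Vh₁ᴴ * (UI * Vh₂₀) = V₁ᴴ * WI * V₂ ∧
    (opNorm (Vh₁ - UI * Vh₂₀)) ^ 2 =
      2 * opNorm ((1 : Matrix (Fin m) (Fin m) ℂ) -
        (1 / 2 : ℂ) • ((V₁ᴴ * WI * V₂) + (V₁ᴴ * WI * V₂)ᴴ)) := by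
  have hUu : Uᴴ * U = 1 := by
    simpa [Matrix.star_eq_conjTranspose] using hU.1
  -- Part 1 : W is a contraction
  have part1 : opNorm W ≤ 1 := by
    set E : Matrix (Fin 2 × Fin k) (Fin k) ℂ :=
      fun r c => (if r.1 = 0 then 1 else 0) * (if r.2 = c then 1 else 0) with hE
    have hEiso : Eᴴ * E = 1 := by
      ext e e'
      simp only [Matrix.mul_apply, Matrix.conjTranspose_apply]
      simp [hE, Matrix.mul_apply, Matrix.one_apply, Fintype.sum_prod_type, apply_ite (starRingEnd ℂ),
        ite_and, Finset.sum_ite_eq, Finset.sum_ite_eq', mul_comm, eq_comm]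
    have hWE : W = Eᴴ * (U * E) := by
      ext e e'
      simp only [Matrix.mul_apply, Matrix.conjTranspose_apply]
      simp [hE, hW, Matrix.mul_apply, Fintype.sum_prod_type, apply_ite (starRingEnd ℂ),
        mul_ite, ite_mul, Finset.sum_ite_eq, Finset.sum_ite_eq']
    rw [opNorm_eq_norm, hWE]
    calc ‖Eᴴ * (U * E)‖ ≤ ‖Eᴴ‖ * ‖U * E‖ := Matrix.l2_opNorm_mul _ _
      _ ≤ ‖Eᴴ‖ * (‖U‖ * ‖E‖) := by
          exact mul_le_mul_of_nonneg_left (Matrix.l2_opNorm_mul _ _) (norm_nonneg _)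
      _ ≤ 1 * (1 * 1) := by
          have h1 : ‖Eᴴ‖ ≤ 1 := by
            rw [Matrix.l2_opNorm_conjTranspose]; exact norm_le_one_of_isometry hEiso
          have h2 : ‖E‖ ≤ 1 := norm_le_one_of_isometry hEiso
          have h3 : ‖U‖ ≤ 1 := norm_le_one_of_isometry hUu
          gcongr
      _ = 1 := by ring
  -- Part 2 : overlap identity
  have part2 : Vh₁ᴴ * (UI * Vh₂₀) = V₁ᴴ * WI * V₂ := by
    ext j j'
    simp only [Matrix.mul_apply, Matrix.conjTranspose_apply]
    simp [hVh₁, hVh₂₀, hUI, hWI, hW, Matrix.mul_apply, Fintype.sum_prod_type,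
      apply_ite (starRingEnd ℂ), mul_ite, ite_mul, Finset.sum_ite_eq, Finset.sum_ite_eq',
      Finset.mul_sum, Finset.sum_mul, mul_assoc]
    exact sum_swap3 fun x y z => (starRingEnd ℂ) (V₁ (x, y) j) * (U (0, x) (0, z) * V₂ (z, y) j')
  refine ⟨part1, part2, ?_⟩
  -- Part 3
  have hA : Vh₁ᴴ * Vh₁ = 1 := by
    ext j j'
    have h1 := congrFun (congrFun hV₁ j) j'
    simp only [Matrix.mul_apply, Matrix.conjTranspose_apply]
    simpa [hVh₁, Matrix.mul_apply, Fintype.sum_prod_type, apply_ite (starRingEnd ℂ),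
      mul_ite, ite_mul, Finset.sum_ite_eq, Finset.sum_ite_eq'] using h1
  have hUIu : UIᴴ * UI = 1 := by
    have hUIk : UI = (U ⊗ₖ (1 : Matrix (Fin n') (Fin n') ℂ)).submatrix
        (Equiv.prodAssoc (Fin 2) (Fin k) (Fin n')).symm
        (Equiv.prodAssoc (Fin 2) (Fin k) (Fin n')).symm := by
      ext r c
      obtain ⟨i, e, a⟩ := r
      obtain ⟨i', e', a'⟩ := c
      simp [hUI, Matrix.one_apply]
    have hk : (U ⊗ₖ (1 : Matrix (Fin n') (Fin n') ℂ))ᴴ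
        = Uᴴ ⊗ₖ (1 : Matrix (Fin n') (Fin n') ℂ) := by
      ext r c
      obtain ⟨r1, r2⟩ := r
      obtain ⟨c1, c2⟩ := c
      simp [Matrix.conjTranspose_apply, Matrix.one_apply, star_mul', apply_ite (star : ℂ → ℂ),
        eq_comm, mul_comm]
    rw [hUIk, Matrix.conjTranspose_submatrix, hk,
      Matrix.submatrix_mul_equiv _ _ _ (Equiv.prodAssoc (Fin 2) (Fin k) (Fin n')).symm _,
      ← Matrix.mul_kronecker_mul, hUu, one_mul, Matrix.one_kronecker_one,
      Matrix.submatrix_one_equiv]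
  have hB : (UI * Vh₂₀)ᴴ * (UI * Vh₂₀) = 1 := by
    have hB0 : Vh₂₀ᴴ * Vh₂₀ = 1 := by
      ext j j'
      have h1 := congrFun (congrFun hV₂ j) j'
      simp only [Matrix.mul_apply, Matrix.conjTranspose_apply]
      simpa [hVh₂₀, Matrix.mul_apply, Fintype.sum_prod_type, apply_ite (starRingEnd ℂ),
        mul_ite, ite_mul, Finset.sum_ite_eq, Finset.sum_ite_eq'] using h1
    rw [Matrix.conjTranspose_mul, Matrix.mul_assoc, ← Matrix.mul_assoc UIᴴ, hUIu, Matrix.one_mul,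
      hB0]
  -- the C* computation
  rw [opNorm_eq_norm, opNorm_eq_norm]
  set B := UI * Vh₂₀ with hBdef
  have key : (Vh₁ - B)ᴴ * (Vh₁ - B) =
      (2 : ℂ) • ((1 : Matrix (Fin m) (Fin m) ℂ) -
        (1 / 2 : ℂ) • ((V₁ᴴ * WI * V₂) + (V₁ᴴ * WI * V₂)ᴴ)) := by
    have hAB : Vh₁ᴴ * B = V₁ᴴ * WI * V₂ := part2
    have hBA : Bᴴ * Vh₁ = (V₁ᴴ * WI * V₂)ᴴ := by
      conv_rhs => rw [← hAB, Matrix.conjTranspose_mul, Matrix.conjTranspose_conjTranspose]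
    rw [Matrix.conjTranspose_sub, Matrix.sub_mul, Matrix.mul_sub, Matrix.mul_sub,
      hA, hB, hAB, hBA]
    module
  rw [pow_two, ← Matrix.l2_opNorm_conjTranspose_mul_self, key, norm_smul]
  norm_num
end helpers
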